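/- Let (V, ρ) be a unitary right representation of B^×/F^× and R an order in the totally definite quaternion algebra B. For x ∈ B̂^× and v ∈ V, define φ_{x,v}(y) = Σ_{γ ∈ Γ_{x,y}} v·γ, where Γ_{x,y} = (B^× ∩ x⁻¹R̂^×y)/O_F^×. Then for the height pairing ⟨φ,ψ⟩ = Σ_{x ∈ cl(R)} (1/w_x)⟨φ(x), ψ(x)⟩, one has ⟨φ_{x,v}, φ_{y,w}⟩ = Σ_{γ ∈ Γ_{x,y}} ⟨v·γ, w⟩. -/

import Mathlib

open scoped Classical

/- Abstract adelic framework: `G` plays the role of `B̂^×`, `Bx` the image of `B^×`,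
`U` the compact open subgroup `R̂^×`, `Fh` the central subgroup `F̂^×`.  Then
`F^× = Bx ⊓ Fh`, `O_F^× = Bx ⊓ U` and `Ô_F^× = Fh ⊓ U`. -/

variable {G : Type*} [Group G]

/-- The set `Γ_{x,y} = B^× ∩ x⁻¹ R̂^× y` (before dividing by `O_F^×`). -/
def gammaSet (Bx U : Subgroup G) (x y : G) : Set G :=
  {γ | γ ∈ Bx ∧ ∃ u ∈ U, γ = x⁻¹ * u * y}

/-- The set `Γ'_{x,y} = B^× ∩ x⁻¹ F̂^× R̂^× y` (before dividing by `F^×`). -/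
def gamma'Set (Bx Fh U : Subgroup G) (x y : G) : Set G :=
  {γ | γ ∈ Bx ∧ ∃ f ∈ Fh, ∃ u ∈ U, γ = x⁻¹ * f * u * y}

/-- The left `OF`-orbit of `γ`. -/
def leftOrbit (OF : Subgroup G) (γ : G) : Set G := {δ | ∃ ε ∈ OF, δ = ε * γ}

/-- `Γ_{x,y}` as a set of `O_F^×`-orbits, i.e. `(B^× ∩ x⁻¹R̂^×y)/O_F^×`. -/
def Gamma (Bx U OF : Subgroup G) (x y : G) : Set (Set G) :=
  {s | ∃ γ ∈ gammaSet Bx U x y, s = leftOrbit OF γ}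

/-- The common value of `v·γ` on an orbit `s` (via a choice of representative). -/
noncomputable def orbitVal {V : Type*} [AddCommMonoid V]
    (act : V → G → V) (v : V) (s : Set G) : V :=
  if h : s.Nonempty then act v h.some else 0

/-- The quaternionic modular form `φ_{x,v}`, with `φ_{x,v}(y) = Σ_{γ ∈ Γ_{x,y}} v·γ`. -/
noncomputable def phiForm {V : Type*} [AddCommMonoid V]
    (Bx U OF : Subgroup G) (act : V → G → V) (x : G) (v : V) (y : G) : V :=
  ∑ᶠ s ∈ Gamma Bx U OF x y, orbitVal act v s

/-- The double coset `R̂^× x B^×`. -/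
def doubleCoset (U Bx : Subgroup G) (x : G) : Set G :=
  {g | ∃ u ∈ U, ∃ b ∈ Bx, g = u * x * b}

/-- The class set `cl(R) = R̂^×\B̂^×/B^×`, realized as the set of double cosets. -/
def classSet (U Bx : Subgroup G) : Set (Set G) :=
  {s | ∃ x : G, s = doubleCoset U Bx x}

/-- The weight `w_x = |Γ_x| = |Γ_{x,x}|`. -/
noncomputable def weight (Bx U OF : Subgroup G) (x : G) : ℕ :=
  Nat.card (Gamma Bx U OF x x)

/-- The height pairing `⟨φ,ψ⟩ = Σ_{x ∈ cl(R)} (1/w_x)⟨φ(x),ψ(x)⟩`. -/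
noncomputable def heightPairing {V : Type*} [NormedAddCommGroup V] [InnerProductSpace ℂ V]
    (Bx U OF : Subgroup G) (φ ψ : G → V) : ℂ :=
  ∑ᶠ s ∈ classSet U Bx,
    if h : s.Nonempty then
      (weight Bx U OF h.some : ℂ)⁻¹ * (inner ℂ (φ h.some) (ψ h.some) : ℂ)
    else 0

section Aux

variable {G : Type*} [Group G]

/-- `{a * b⁻¹ | a ∈ s, b ∈ t}`. -/
def mulInvSet (s t : Set G) : Set G := {g | ∃ a ∈ s, ∃ b ∈ t, g = a * b⁻¹}

/-- `{a * b | a ∈ s, b ∈ t}`. -/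
def mulSet (s t : Set G) : Set G := {g | ∃ a ∈ s, ∃ b ∈ t, g = a * b}

lemma self_mem_leftOrbit (OF : Subgroup G) (γ : G) : γ ∈ leftOrbit OF γ :=
  ⟨1, one_mem _, (one_mul _).symm⟩

lemma leftOrbit_nonempty (OF : Subgroup G) (γ : G) : (leftOrbit OF γ).Nonempty :=
  ⟨γ, self_mem_leftOrbit OF γ⟩

lemma act_eq_of_mem_leftOrbit {V : Type*} [AddCommMonoid V] {OF : Subgroup G}
    (act : V → G → V)
    (hmul : ∀ (v : V) (g h : G), act v (g * h) = act (act v g) h)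
    (htriv : ∀ (v : V), ∀ ε ∈ OF, act v ε = v)
    (hcent : ∀ ε ∈ OF, ∀ g : G, ε * g = g * ε)
    (v : V) {γ δ : G} (hδ : δ ∈ leftOrbit OF γ) : act v δ = act v γ := by
  obtain ⟨ε, hε, rfl⟩ := hδ
  rw [hcent ε hε, hmul, htriv _ ε hε]

lemma orbitVal_leftOrbit {V : Type*} [AddCommMonoid V] {OF : Subgroup G}
    (act : V → G → V)
    (hmul : ∀ (v : V) (g h : G), act v (g * h) = act (act v g) h)
    (htriv : ∀ (v : V), ∀ ε ∈ OF, act v ε = v)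
    (hcent : ∀ ε ∈ OF, ∀ g : G, ε * g = g * ε)
    (v : V) (γ : G) : orbitVal act v (leftOrbit OF γ) = act v γ := by
  rw [orbitVal, dif_pos (leftOrbit_nonempty OF γ)]
  exact act_eq_of_mem_leftOrbit act hmul htriv hcent v (leftOrbit_nonempty OF γ).some_mem

lemma mulInvSet_leftOrbit {OF : Subgroup G}
    (hcent : ∀ ε ∈ OF, ∀ g : G, ε * g = g * ε) (γ δ : G) :
    mulInvSet (leftOrbit OF γ) (leftOrbit OF δ) = leftOrbit OF (γ * δ⁻¹) := by
  ext g
  constructor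
  · rintro ⟨a, ⟨ε₁, h1, rfl⟩, b, ⟨ε₂, h2, rfl⟩, rfl⟩
    refine ⟨ε₁ * ε₂⁻¹, mul_mem h1 (inv_mem h2), ?_⟩
    have h := hcent ε₂⁻¹ (inv_mem h2) (γ * δ⁻¹)
    calc ε₁ * γ * (ε₂ * δ)⁻¹ = ε₁ * (γ * δ⁻¹ * ε₂⁻¹) := by group
      _ = ε₁ * (ε₂⁻¹ * (γ * δ⁻¹)) := by rw [h]
      _ = ε₁ * ε₂⁻¹ * (γ * δ⁻¹) := by group
  · rintro ⟨ε, hε, rfl⟩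
    exact ⟨ε * γ, ⟨ε, hε, rfl⟩, δ, self_mem_leftOrbit OF δ, by group⟩

lemma mulSet_leftOrbit {OF : Subgroup G}
    (hcent : ∀ ε ∈ OF, ∀ g : G, ε * g = g * ε) (γ δ : G) :
    mulSet (leftOrbit OF γ) (leftOrbit OF δ) = leftOrbit OF (γ * δ) := by
  ext g
  constructor
  · rintro ⟨a, ⟨ε₁, h1, rfl⟩, b, ⟨ε₂, h2, rfl⟩, rfl⟩
    refine ⟨ε₁ * ε₂, mul_mem h1 h2, ?_⟩
    have h := hcent ε₂ h2 γ
    calc ε₁ * γ * (ε₂ * δ) = ε₁ * (γ * ε₂) * δ := by group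
      _ = ε₁ * (ε₂ * γ) * δ := by rw [← h]
      _ = ε₁ * ε₂ * (γ * δ) := by group
  · rintro ⟨ε, hε, rfl⟩
    exact ⟨ε * γ, ⟨ε, hε, rfl⟩, δ, self_mem_leftOrbit OF δ, by group⟩

lemma image_mul_leftOrbit {OF : Subgroup G}
    (hcent : ∀ ε ∈ OF, ∀ g : G, ε * g = g * ε) (c γ : G) :
    (fun g => c * g) '' leftOrbit OF γ = leftOrbit OF (c * γ) := by
  ext g
  constructor
  · rintro ⟨a, ⟨ε, hε, rfl⟩, rfl⟩
    refine ⟨ε, hε, ?_⟩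
    show c * (ε * γ) = ε * (c * γ)
    rw [← mul_assoc, ← hcent ε hε c, mul_assoc]
  · rintro ⟨ε, hε, rfl⟩
    refine ⟨ε * γ, ⟨ε, hε, rfl⟩, ?_⟩
    show c * (ε * γ) = ε * (c * γ)
    rw [← mul_assoc, ← hcent ε hε c, mul_assoc]

lemma leftOrbit_mem_Gamma {Bx U OF : Subgroup G} {x y γ u : G}
    (hγ : γ ∈ Bx) (hu : u ∈ U) (h : γ = x⁻¹ * u * y) :
    leftOrbit OF γ ∈ Gamma Bx U OF x y :=
  ⟨γ, ⟨hγ, u, hu, h⟩, rfl⟩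

lemma self_mem_doubleCoset (U Bx : Subgroup G) (x : G) : x ∈ doubleCoset U Bx x :=
  ⟨1, one_mem _, 1, one_mem _, by group⟩

lemma doubleCoset_eq_of_mem {U Bx : Subgroup G} {z x : G} (h : z ∈ doubleCoset U Bx x) :
    doubleCoset U Bx z = doubleCoset U Bx x := by
  obtain ⟨u₀, hu₀, b₀, hb₀, rfl⟩ := h
  ext g
  constructor
  · rintro ⟨u, hu, b, hb, rfl⟩
    exact ⟨u * u₀, mul_mem hu hu₀, b₀ * b, mul_mem hb₀ hb, by group⟩
  · rintro ⟨u, hu, b, hb, rfl⟩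
    exact ⟨u * u₀⁻¹, mul_mem hu (inv_mem hu₀), b₀⁻¹ * b, mul_mem (inv_mem hb₀) hb, by group⟩

lemma Gamma_eq_empty {Bx U : Subgroup G} (OF : Subgroup G) {y z : G}
    (h : z ∉ doubleCoset U Bx y) : Gamma Bx U OF y z = ∅ := by
  ext s
  simp only [Set.mem_empty_iff_false, iff_false]
  rintro ⟨γ, ⟨hγ, u, hu, rfl⟩, rfl⟩
  exact h ⟨u⁻¹, inv_mem hu, _, hγ, by group⟩

end Aux

lemma key_inner {G : Type*} [Group G] {V : Type*}
    [NormedAddCommGroup V] [InnerProductSpace ℂ V]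
    (Bx U OF : Subgroup G) (act : V → G → V)
    (hmul : ∀ (v : V) (g h : G), act v (g * h) = act (act v g) h)
    (hunit : ∀ (v w : V) (g : G), g ∈ Bx →
      (inner ℂ (act v g) (act w g) : ℂ) = (inner ℂ v w : ℂ))
    (htriv : ∀ (v : V), ∀ ε ∈ OF, act v ε = v)
    (hcent : ∀ ε ∈ OF, ∀ g : G, ε * g = g * ε)
    (hfin : ∀ x y : G, (Gamma Bx U OF x y).Finite)
    (hwpos : ∀ x : G, 0 < weight Bx U OF x)
    (x y : G) (v w : V) {z u₀ b₀ : G} (hu₀ : u₀ ∈ U) (hb₀ : b₀ ∈ Bx)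
    (hz : z = u₀ * y * b₀) :
    (weight Bx U OF z : ℂ)⁻¹ *
      (inner ℂ (phiForm Bx U OF act x v z) (phiForm Bx U OF act y w z) : ℂ)
      = ∑ᶠ s ∈ Gamma Bx U OF x y, (inner ℂ (orbitVal act v s) w : ℂ) := by
  classical
  subst hz
  set z := u₀ * y * b₀ with hzdef
  set A := (hfin x z).toFinset with hA
  set B := (hfin y z).toFinset with hB
  set C := (hfin x y).toFinset with hC
  have hφ : phiForm Bx U OF act x v z = ∑ s ∈ A, orbitVal act v s := by
    rw [phiForm, ← (hfin x z).coe_toFinset, finsum_mem_coe_finset]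
  have hψ : phiForm Bx U OF act y w z = ∑ t ∈ B, orbitVal act w t := by
    rw [phiForm, ← (hfin y z).coe_toFinset, finsum_mem_coe_finset]
  have hRHS : (∑ᶠ s ∈ Gamma Bx U OF x y, (inner ℂ (orbitVal act v s) w : ℂ))
      = ∑ r ∈ C, (inner ℂ (orbitVal act v r) w : ℂ) := by
    rw [← (hfin x y).coe_toFinset, finsum_mem_coe_finset]
  have hterm : ∀ s ∈ A, ∀ t ∈ B,
      (inner ℂ (orbitVal act v s) (orbitVal act w t) : ℂ)
        = (inner ℂ (orbitVal act v (mulInvSet s t)) w : ℂ) := by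
    intro s hs t ht
    obtain ⟨γ, ⟨hγB, u, hu, hγ⟩, rfl⟩ := (hfin x z).mem_toFinset.mp hs
    obtain ⟨δ, ⟨hδB, u', hu', hδ⟩, rfl⟩ := (hfin y z).mem_toFinset.mp ht
    rw [mulInvSet_leftOrbit hcent, orbitVal_leftOrbit act hmul htriv hcent,
        orbitVal_leftOrbit act hmul htriv hcent, orbitVal_leftOrbit act hmul htriv hcent]
    have h1 : act (act v (γ * δ⁻¹)) δ = act v γ := by
      rw [← hmul, inv_mul_cancel_right]
    rw [← hunit (act v (γ * δ⁻¹)) w δ hδB, h1]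
  have hdouble : (inner ℂ (phiForm Bx U OF act x v z) (phiForm Bx U OF act y w z) : ℂ)
      = ∑ p ∈ A ×ˢ B, (inner ℂ (orbitVal act v (mulInvSet p.1 p.2)) w : ℂ) := by
    rw [hφ, hψ, sum_inner, Finset.sum_product]
    refine Finset.sum_congr rfl fun s hs => ?_
    rw [inner_sum]
    exact Finset.sum_congr rfl fun t ht => hterm s hs t ht
  have hbij : (∑ p ∈ A ×ˢ B, (inner ℂ (orbitVal act v (mulInvSet p.1 p.2)) w : ℂ))
      = ∑ q ∈ C ×ˢ B, (inner ℂ (orbitVal act v q.1) w : ℂ) := by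
    refine Finset.sum_nbij' (fun p => (mulInvSet p.1 p.2, p.2))
      (fun q => (mulSet q.1 q.2, q.2)) ?_ ?_ ?_ ?_ ?_
    · rintro ⟨s, t⟩ hp
      rw [Finset.mem_product] at hp ⊢
      dsimp only
      obtain ⟨hs, ht⟩ := hp
      obtain ⟨γ, ⟨hγB, u, hu, hγ⟩, rfl⟩ := (hfin x z).mem_toFinset.mp hs
      obtain ⟨δ, ⟨hδB, u', hu', hδ⟩, rfl⟩ := (hfin y z).mem_toFinset.mp ht
      refine ⟨(hfin x y).mem_toFinset.mpr ?_, ht⟩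
      rw [mulInvSet_leftOrbit hcent]
      exact leftOrbit_mem_Gamma (mul_mem hγB (inv_mem hδB))
        (mul_mem hu (inv_mem hu')) (by rw [hγ, hδ]; group)
    · rintro ⟨r, t⟩ hq
      rw [Finset.mem_product] at hq ⊢
      dsimp only
      obtain ⟨hr, ht⟩ := hq
      obtain ⟨β, ⟨hβB, u, hu, hβ⟩, rfl⟩ := (hfin x y).mem_toFinset.mp hr
      obtain ⟨δ, ⟨hδB, u', hu', hδ⟩, rfl⟩ := (hfin y z).mem_toFinset.mp ht
      refine ⟨(hfin x z).mem_toFinset.mpr ?_, ht⟩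
      rw [mulSet_leftOrbit hcent]
      exact leftOrbit_mem_Gamma (mul_mem hβB hδB)
        (mul_mem hu hu') (by rw [hβ, hδ]; group)
    · rintro ⟨s, t⟩ hp
      rw [Finset.mem_product] at hp
      obtain ⟨hs, ht⟩ := hp
      obtain ⟨γ, ⟨hγB, u, hu, hγ⟩, rfl⟩ := (hfin x z).mem_toFinset.mp hs
      obtain ⟨δ, ⟨hδB, u', hu', hδ⟩, rfl⟩ := (hfin y z).mem_toFinset.mp ht
      have : mulSet (mulInvSet (leftOrbit OF γ) (leftOrbit OF δ)) (leftOrbit OF δ)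
          = leftOrbit OF γ := by
        rw [mulInvSet_leftOrbit hcent, mulSet_leftOrbit hcent, inv_mul_cancel_right]
      simp [this]
    · rintro ⟨r, t⟩ hq
      rw [Finset.mem_product] at hq
      obtain ⟨hr, ht⟩ := hq
      obtain ⟨β, ⟨hβB, u, hu, hβ⟩, rfl⟩ := (hfin x y).mem_toFinset.mp hr
      obtain ⟨δ, ⟨hδB, u', hu', hδ⟩, rfl⟩ := (hfin y z).mem_toFinset.mp ht
      have : mulInvSet (mulSet (leftOrbit OF β) (leftOrbit OF δ)) (leftOrbit OF δ)
          = leftOrbit OF β := by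
        rw [mulSet_leftOrbit hcent, mulInvSet_leftOrbit hcent, mul_inv_cancel_right]
      simp [this]
    · intro p hp
      rfl
  have hsplit : (∑ q ∈ C ×ˢ B, (inner ℂ (orbitVal act v q.1) w : ℂ))
      = (B.card : ℂ) * ∑ r ∈ C, (inner ℂ (orbitVal act v r) w : ℂ) := by
    rw [Finset.sum_product, Finset.mul_sum]
    exact Finset.sum_congr rfl fun r _ => by
      dsimp only; rw [Finset.sum_const, nsmul_eq_mul]
  have hcard : B.card = weight Bx U OF z := by
    have himg : Gamma Bx U OF z z
        = (fun s : Set G => (fun g => b₀⁻¹ * g) '' s) '' (Gamma Bx U OF y z) := by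
      ext s'
      constructor
      · rintro ⟨η, ⟨hηB, u, hu, hη⟩, rfl⟩
        refine ⟨leftOrbit OF (b₀ * η),
          leftOrbit_mem_Gamma (mul_mem hb₀ hηB) (mul_mem (inv_mem hu₀) hu)
            (by rw [hη, hzdef]; group), ?_⟩
        dsimp only
        rw [image_mul_leftOrbit hcent, inv_mul_cancel_left]
      · rintro ⟨s, ⟨δ, ⟨hδB, u, hu, hδ⟩, rfl⟩, rfl⟩
        dsimp only
        rw [image_mul_leftOrbit hcent]
        exact leftOrbit_mem_Gamma (mul_mem (inv_mem hb₀) hδB)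
          (mul_mem hu₀ hu) (by rw [hδ, hzdef]; group)
    have hinj : Function.Injective (fun s : Set G => (fun g => b₀⁻¹ * g) '' s) :=
      Set.image_injective.mpr (mul_right_injective b₀⁻¹)
    rw [weight, himg, Nat.card_coe_set_eq, Set.ncard_image_of_injective _ hinj,
      Set.ncard_eq_toFinset_card _ (hfin y z)]
  have hwne : ((weight Bx U OF z : ℂ)) ≠ 0 :=
    Nat.cast_ne_zero.mpr (hwpos z).ne'
  rw [hdouble, hbij, hsplit, hRHS, hcard, inv_mul_cancel_left₀ hwne]

/-- `⟨φ_{x,v}, φ_{y,w}⟩ = Σ_{γ ∈ Γ_{x,y}} ⟨v·γ, w⟩`. -/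
theorem heightPairing_phiForm_phiForm {V : Type*}
    [NormedAddCommGroup V] [InnerProductSpace ℂ V]
    (Bx U OF : Subgroup G)
    (act : V → G → V)
    (hone : ∀ v : V, act v 1 = v)
    (hmul : ∀ (v : V) (g h : G), act v (g * h) = act (act v g) h)
    (hadd : ∀ (v w : V) (g : G), act (v + w) g = act v g + act w g)
    (hunit : ∀ (v w : V) (g : G), g ∈ Bx →
      (inner ℂ (act v g) (act w g) : ℂ) = (inner ℂ v w : ℂ))
    (htriv : ∀ (v : V), ∀ ε ∈ OF, act v ε = v)
    (hOFB : OF ≤ Bx) (hOFU : OF ≤ U)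
    (hcent : ∀ ε ∈ OF, ∀ g : G, ε * g = g * ε)
    (hfin : ∀ x y : G, (Gamma Bx U OF x y).Finite)
    (hwpos : ∀ x : G, 0 < weight Bx U OF x)
    (hcls : (classSet U Bx).Finite)
    (x y : G) (v w : V) :
    heightPairing Bx U OF (phiForm Bx U OF act x v) (phiForm Bx U OF act y w)
      = ∑ᶠ s ∈ Gamma Bx U OF x y, (inner ℂ (orbitVal act v s) w : ℂ) := by
  classical
  have hdcy : (doubleCoset U Bx y).Nonempty := ⟨y, self_mem_doubleCoset U Bx y⟩
  rw [heightPairing, ← hcls.coe_toFinset, finsum_mem_coe_finset]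
  refine (Finset.sum_eq_single_of_mem (doubleCoset U Bx y)
      (hcls.mem_toFinset.mpr ⟨y, rfl⟩) ?_).trans ?_
  · intro s hs hne
    obtain ⟨x', rfl⟩ := hcls.mem_toFinset.mp hs
    have hne' : (doubleCoset U Bx x').Nonempty := ⟨x', self_mem_doubleCoset U Bx x'⟩
    rw [dif_pos hne']
    have hnot : hne'.some ∉ doubleCoset U Bx y := fun hmem =>
      hne ((doubleCoset_eq_of_mem hne'.some_mem).symm.trans (doubleCoset_eq_of_mem hmem))
    have h0 : phiForm Bx U OF act y w hne'.some = 0 := by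
      rw [phiForm, Gamma_eq_empty OF hnot, finsum_mem_empty]
    rw [h0, inner_zero_right, mul_zero]
  · rw [dif_pos hdcy]
    obtain ⟨u₀, hu₀, b₀, hb₀, hz⟩ := hdcy.some_mem
    exact key_inner Bx U OF act hmul hunit htriv hcent hfin hwpos x y v w hu₀ hb₀ hz
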